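/- For g ∈ ℝ^T, there exists A ⊆ T with OPT(g) = SOL(A) if and only if there exists an optimal super-reparametrization f of g with OPT(g) = OPT(f). -/

import Mathlib

open Finset

variable {V : Type*} {D : Type*}

/-- A tuple `(S, k)` where `S ∈ C` is a scope and `k : D^S`. -/
abbrev Tup (C : Finset (Finset V)) (D : Type*) : Type _ :=
  (S : {S : Finset V // S ∈ C}) × ({v : V // v ∈ S.1} → D)

variable [Fintype V] [DecidableEq V] [Fintype D] [DecidableEq D] [Nonempty D]

/-- WCSP objective `⟨f, φ(x)⟩ = Σ_{S∈C} f_S(x[S])`. -/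
def val (C : Finset (Finset V)) (f : Tup C D → ℝ) (x : V → D) : ℝ :=
  ∑ S : {S : Finset V // S ∈ C}, f ⟨S, fun i => x i.1⟩

/-- Upper bound `B(f) = Σ_{S∈C} max_{k∈D^S} f_S(k)`. -/
noncomputable def B (C : Finset (Finset V)) (f : Tup C D → ℝ) : ℝ :=
  ∑ S : {S : Finset V // S ∈ C},
    Finset.univ.sup' Finset.univ_nonempty (fun k : {v : V // v ∈ S.1} → D => f ⟨S, k⟩)

/-- The active-tuple CSP: tuples whose weight is maximal within their scope. -/
def Astar (C : Finset (Finset V)) (f : Tup C D → ℝ) : Set (Tup C D) :=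
  {t | ∀ k : {v : V // v ∈ t.1.1} → D, f ⟨t.1, k⟩ ≤ f t}

/-- Solution set of a CSP `A ⊆ T`. -/
def SOL (C : Finset (Finset V)) (A : Set (Tup C D)) : Set (V → D) :=
  {x | ∀ S : {S : Finset V // S ∈ C}, (⟨S, fun i => x i.1⟩ : Tup C D) ∈ A}

/-- `f` is a super-reparametrization of `g`. -/
def SuperRepar (C : Finset (Finset V)) (g f : Tup C D → ℝ) : Prop :=
  ∀ x : V → D, val C g x ≤ val C f x

/-- Set of optimal assignments of WCSP `g`. -/
def OPT (C : Finset (Finset V)) (g : Tup C D → ℝ) : Set (V → D) :=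
  {x | ∀ y : V → D, val C g y ≤ val C g x}

/-- `d` is an `R`-deactivating direction for CSP `A`. -/
def Deact (C : Finset (Finset V)) (A R : Set (Tup C D)) (d : Tup C D → ℝ) : Prop :=
  (∀ x : V → D, 0 ≤ val C d x) ∧ (∀ t ∈ R, d t < 0) ∧ (∀ t ∈ A \ R, d t = 0)

/-- Minimal CSP for a set of assignments `X`. -/
def Amin (C : Finset (Finset V)) (X : Set (V → D)) : Set (Tup C D) :=
  ⋂₀ {A : Set (Tup C D) | X ⊆ SOL C A}

theorem stmt15 (C : Finset (Finset V)) (g : Tup C D → ℝ) :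
    (∃ A : Set (Tup C D), OPT C g = SOL C A) ↔
      (∃ f : Tup C D → ℝ, SuperRepar C g f ∧
        (∀ f' : Tup C D → ℝ, SuperRepar C g f' → B C f ≤ B C f') ∧
        OPT C g = OPT C f) := by
  classical
  by_cases hC : Nonempty {S : Finset V // S ∈ C}
  case neg =>
    haveI : IsEmpty {S : Finset V // S ∈ C} := not_nonempty_iff.mp hC
    have hval : ∀ (h : Tup C D → ℝ) (x : V → D), _root_.val C h x = 0 := by
      intro h x
      unfold _root_.val
      rw [Finset.univ_eq_empty, Finset.sum_empty]
    have hB : ∀ (h : Tup C D → ℝ), B C h = 0 := by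
      intro h
      unfold B
      rw [Finset.univ_eq_empty, Finset.sum_empty]
    constructor
    · intro _
      exact ⟨g, fun x => le_of_eq rfl, fun f' _ => by rw [hB, hB], rfl⟩
    · intro _
      refine ⟨∅, ?_⟩
      ext x
      simp only [OPT, SOL, Set.mem_setOf_eq]
      constructor
      · intro _ S
        exact absurd ⟨S⟩ hC
      · intro _ y
        rw [hval, hval]
  case pos =>
    haveI := hC
    obtain ⟨x₀, -, hx₀⟩ := Finset.exists_max_image (Finset.univ : Finset (V → D))
      (_root_.val C g) ⟨Classical.arbitrary _, Finset.mem_univ _⟩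
    have hM : ∀ y, _root_.val C g y ≤ _root_.val C g x₀ := fun y => hx₀ y (Finset.mem_univ y)
    have hx₀opt : x₀ ∈ OPT C g := hM
    have hn0 : 0 < Fintype.card {S : Finset V // S ∈ C} := Fintype.card_pos
    have hn : (0:ℝ) < (Fintype.card {S : Finset V // S ∈ C} : ℝ) := by exact_mod_cast hn0
    have hn' : (Fintype.card {S : Finset V // S ∈ C} : ℝ) ≠ 0 := ne_of_gt hn
    have valleB : ∀ (h : Tup C D → ℝ) (x : V → D), _root_.val C h x ≤ B C h := by
      intro h x
      exact Finset.sum_le_sum fun S _ =>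
        Finset.le_sup' (fun k : {v : V // v ∈ S.1} → D => h ⟨S, k⟩) (Finset.mem_univ _)
    have hsum : ∀ c : ℝ, (∑ _S : {S : Finset V // S ∈ C}, c)
        = (Fintype.card {S : Finset V // S ∈ C} : ℝ) * c := by
      intro c
      rw [Finset.sum_const, Finset.card_univ, nsmul_eq_mul]
    have hMn : (Fintype.card {S : Finset V // S ∈ C} : ℝ) *
        (_root_.val C g x₀ / (Fintype.card {S : Finset V // S ∈ C} : ℝ)) = _root_.val C g x₀ := by
      rw [← mul_div_assoc]
      exact mul_div_cancel_left₀ _ hn'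
    constructor
    · rintro ⟨A, hA⟩
      set ε := (Finset.univ : Finset (V → D)).inf' ⟨x₀, Finset.mem_univ _⟩
        (fun x => if x ∈ OPT C g then 1 else
          (_root_.val C g x₀ - _root_.val C g x) / (Fintype.card {S : Finset V // S ∈ C} : ℝ)) with hεdef
      have hεpos : 0 < ε := by
        rw [hεdef]; refine (Finset.lt_inf'_iff _).2 ?_
        intro x _
        split_ifs with hx
        · exact one_pos
        · have hlt : _root_.val C g x < _root_.val C g x₀ := by
            simp only [OPT, Set.mem_setOf_eq] at hx
            push_neg at hx
            obtain ⟨y, hy⟩ := hx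
            exact lt_of_lt_of_le hy (hM y)
          exact div_pos (by linarith) hn
      have hεle : ∀ x, x ∉ OPT C g →
          (Fintype.card {S : Finset V // S ∈ C} : ℝ) * ε ≤ _root_.val C g x₀ - _root_.val C g x := by
        intro x hx
        have h1 : ε ≤ (_root_.val C g x₀ - _root_.val C g x) / (Fintype.card {S : Finset V // S ∈ C} : ℝ) := by
          have := Finset.inf'_le (b := x)
            (fun x => if x ∈ OPT C g then (1:ℝ) else
              (_root_.val C g x₀ - _root_.val C g x) / (Fintype.card {S : Finset V // S ∈ C} : ℝ))
            (Finset.mem_univ x)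
          rw [if_neg hx] at this
          exact this
        have h2 := (le_div_iff₀ hn).mp h1
        linarith [h2]
      set Aopt : Set (Tup C D) :=
        {t | ∃ x, x ∈ OPT C g ∧ t.2 = fun i => x i.1} with hAoptdef
      have hAoptA : ∀ t ∈ Aopt, t ∈ A := by
        rintro ⟨S, k⟩ ⟨x, hx, hk⟩
        have hxS : x ∈ SOL C A := hA ▸ hx
        have hk' : k = fun i => x i.1 := hk
        subst hk'
        exact hxS S
      set f : Tup C D → ℝ := fun t => if t ∈ Aopt then
          _root_.val C g x₀ / (Fintype.card {S : Finset V // S ∈ C} : ℝ)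
        else _root_.val C g x₀ / (Fintype.card {S : Finset V // S ∈ C} : ℝ) - ε with hfdef
      have hfle : ∀ t, f t ≤ _root_.val C g x₀ / (Fintype.card {S : Finset V // S ∈ C} : ℝ) := by
        intro t
        rw [hfdef]
        dsimp only
        split_ifs
        · exact le_refl _
        · linarith
      have hoptmem : ∀ x ∈ OPT C g, ∀ S : {S : Finset V // S ∈ C},
          (⟨S, fun i => x i.1⟩ : Tup C D) ∈ Aopt := fun x hx S => ⟨x, hx, rfl⟩
      have hfopt : ∀ x ∈ OPT C g, _root_.val C f x = _root_.val C g x₀ := by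
        intro x hx
        have : _root_.val C f x = ∑ _S : {S : Finset V // S ∈ C},
            _root_.val C g x₀ / (Fintype.card {S : Finset V // S ∈ C} : ℝ) :=
          Finset.sum_congr rfl fun S _ => if_pos (hoptmem x hx S)
        rw [this, hsum, hMn]
      have hSOLopt : ∀ x : V → D, (∀ S : {S : Finset V // S ∈ C},
          (⟨S, fun i => x i.1⟩ : Tup C D) ∈ Aopt) → x ∈ OPT C g := by
        intro x hx
        have : x ∈ SOL C A := fun S => hAoptA _ (hx S)
        rw [hA]
        exact this
      have hfnonopt : ∀ x, x ∉ OPT C g → _root_.val C f x < _root_.val C g x₀ := by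
        intro x hx
        obtain ⟨S, hS⟩ : ∃ S : {S : Finset V // S ∈ C},
            (⟨S, fun i => x i.1⟩ : Tup C D) ∉ Aopt := by
          by_contra h
          push_neg at h
          exact hx (hSOLopt x h)
        have hlt : _root_.val C f x < ∑ _S : {S : Finset V // S ∈ C},
            _root_.val C g x₀ / (Fintype.card {S : Finset V // S ∈ C} : ℝ) := by
          refine Finset.sum_lt_sum (fun T _ => hfle _) ⟨S, Finset.mem_univ S, ?_⟩
          show f ⟨S, fun i => x i.1⟩ < _
          rw [hfdef]
          dsimp only
          rw [if_neg hS]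
          linarith
        rw [hsum, hMn] at hlt
        exact hlt
      have hsuper : SuperRepar C g f := by
        intro x
        by_cases hx : x ∈ OPT C g
        · rw [hfopt x hx]
          exact hM x
        · have h1 : (∑ _S : {S : Finset V // S ∈ C},
              (_root_.val C g x₀ / (Fintype.card {S : Finset V // S ∈ C} : ℝ) - ε)) ≤ _root_.val C f x := by
            refine Finset.sum_le_sum fun T _ => ?_
            show _ ≤ f ⟨T, fun i => x i.1⟩
            rw [hfdef]
            dsimp only
            split_ifs
            · linarith
            · exact le_refl _
          rw [hsum, mul_sub, hMn] at h1
          have h2 := hεle x hx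
          linarith
      have hBf : B C f = _root_.val C g x₀ := by
        have hsup : ∀ S : {S : Finset V // S ∈ C},
            (Finset.univ.sup' Finset.univ_nonempty
              (fun k : {v : V // v ∈ S.1} → D => f ⟨S, k⟩))
            = _root_.val C g x₀ / (Fintype.card {S : Finset V // S ∈ C} : ℝ) := by
          intro S
          apply le_antisymm
          · exact Finset.sup'_le _ _ fun k _ => hfle _
          · have hmem := hoptmem x₀ hx₀opt S
            have hval : f ⟨S, fun i => x₀ i.1⟩
                = _root_.val C g x₀ / (Fintype.card {S : Finset V // S ∈ C} : ℝ) := if_pos hmem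
            calc _root_.val C g x₀ / (Fintype.card {S : Finset V // S ∈ C} : ℝ)
                = f ⟨S, fun i => x₀ i.1⟩ := hval.symm
              _ ≤ _ := Finset.le_sup' (fun k : {v : V // v ∈ S.1} → D => f ⟨S, k⟩)
                (Finset.mem_univ _)
        unfold B
        rw [Finset.sum_congr rfl fun S _ => hsup S, hsum, hMn]
      have hmin : ∀ f' : Tup C D → ℝ, SuperRepar C g f' → B C f ≤ B C f' := by
        intro f' hf'
        rw [hBf]
        exact le_trans (hf' x₀) (valleB f' x₀)
      have hfmax : ∀ y, _root_.val C f y ≤ _root_.val C g x₀ := by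
        intro y
        by_cases hy : y ∈ OPT C g
        · rw [hfopt y hy]
        · exact le_of_lt (hfnonopt y hy)
      have hOPT : OPT C g = OPT C f := by
        ext x
        constructor
        · intro hx y
          rw [hfopt x hx]
          exact hfmax y
        · intro hx
          by_contra hxg
          have h1 : _root_.val C f x < _root_.val C g x₀ := hfnonopt x hxg
          have h2 : _root_.val C g x₀ ≤ _root_.val C f x := by
            rw [← hfopt x₀ hx₀opt]
            exact hx x₀
          linarith
      exact ⟨f, hsuper, hmin, hOPT⟩
    · rintro ⟨f, hsf, hmin, hOPT⟩
      set f₀ : Tup C D → ℝ :=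
        fun _ => _root_.val C g x₀ / (Fintype.card {S : Finset V // S ∈ C} : ℝ) with hf₀def
      have hvalf₀ : ∀ x : V → D, _root_.val C f₀ x = _root_.val C g x₀ := by
        intro x
        have h0 : _root_.val C f₀ x = ∑ _S : {S : Finset V // S ∈ C},
            _root_.val C g x₀ / (Fintype.card {S : Finset V // S ∈ C} : ℝ) := rfl
        rw [h0, hsum, hMn]
      have hsf₀ : SuperRepar C g f₀ := by
        intro x
        rw [hvalf₀]
        exact hM x
      have hBf₀ : B C f₀ = _root_.val C g x₀ := by
        unfold B
        have : ∀ S : {S : Finset V // S ∈ C},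
            (Finset.univ.sup' Finset.univ_nonempty
              (fun k : {v : V // v ∈ S.1} → D => f₀ ⟨S, k⟩))
            = _root_.val C g x₀ / (Fintype.card {S : Finset V // S ∈ C} : ℝ) := by
          intro S
          exact Finset.sup'_const _ _
        rw [Finset.sum_congr rfl fun S _ => this S, hsum, hMn]
      have hBle : B C f ≤ _root_.val C g x₀ := hBf₀ ▸ hmin f₀ hsf₀
      have hBge : _root_.val C g x₀ ≤ B C f := le_trans (hsf x₀) (valleB f x₀)
      have hBf : B C f = _root_.val C g x₀ := le_antisymm hBle hBge
      have hfx₀ : _root_.val C f x₀ = _root_.val C g x₀ :=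
        le_antisymm (hBf ▸ valleB f x₀) (hsf x₀)
      refine ⟨Astar C f, ?_⟩
      rw [hOPT]
      ext x
      simp only [OPT, SOL, Astar, Set.mem_setOf_eq]
      constructor
      · intro hx
        have h1 : _root_.val C g x₀ ≤ _root_.val C f x := hfx₀ ▸ hx x₀
        have h2 : _root_.val C f x = B C f := le_antisymm (valleB f x) (hBf ▸ h1)
        have h3 : ∀ S ∈ (Finset.univ : Finset {S : Finset V // S ∈ C}),
            f ⟨S, fun i => x i.1⟩ = Finset.univ.sup' Finset.univ_nonempty
              (fun k : {v : V // v ∈ S.1} → D => f ⟨S, k⟩) := by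
          rw [← Finset.sum_eq_sum_iff_of_le
            (fun S _ => Finset.le_sup' (fun k : {v : V // v ∈ S.1} → D => f ⟨S, k⟩)
              (Finset.mem_univ (fun i => x i.1)))]
          exact h2
        intro S k
        have := h3 S (Finset.mem_univ S)
        calc f ⟨S, k⟩ ≤ Finset.univ.sup' Finset.univ_nonempty
              (fun k : {v : V // v ∈ S.1} → D => f ⟨S, k⟩) :=
            Finset.le_sup' (fun k : {v : V // v ∈ S.1} → D => f ⟨S, k⟩) (Finset.mem_univ _)
          _ = f ⟨S, fun i => x i.1⟩ := this.symm
      · intro hx y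
        have heq : ∀ S : {S : Finset V // S ∈ C},
            f ⟨S, fun i => x i.1⟩ = Finset.univ.sup' Finset.univ_nonempty
              (fun k : {v : V // v ∈ S.1} → D => f ⟨S, k⟩) := by
          intro S
          exact le_antisymm
            (Finset.le_sup' (fun k : {v : V // v ∈ S.1} → D => f ⟨S, k⟩)
              (Finset.mem_univ (fun i => x i.1)))
            (Finset.sup'_le _ _ fun k _ => hx S k)
        have hvx : _root_.val C f x = B C f := Finset.sum_congr rfl fun S _ => heq S
        rw [hvx]
        exact valleB f y
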